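/- Conversely, there exists a dimensional constant C = C(n) such that for every hypersurface Σ ⊂ ℝⁿ⁺¹, λ(Σ) ≤ C · sup over x ∈ ℝⁿ⁺¹, r > 0 of ℋⁿ(Σ ∩ B_r(x)) / rⁿ. -/

import Mathlib

open MeasureTheory Metric

/-- The Gaussian area (F-functional). -/
noncomputable def Ffun (n : ℕ) (S : Set (EuclideanSpace ℝ (Fin (n + 1))))
    (x₀ : EuclideanSpace ℝ (Fin (n + 1))) (t₀ : ℝ) : ℝ :=
  (4 * Real.pi * t₀) ^ (-(n : ℝ) / 2) *
    ∫ x in S, Real.exp (-‖x - x₀‖ ^ 2 / (4 * t₀)) ∂(μH[(n : ℝ)])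

/-- The entropy: supremum of the F-functional over all centers and scales. -/
noncomputable def entropy (n : ℕ) (S : Set (EuclideanSpace ℝ (Fin (n + 1)))) : ℝ :=
  ⨆ x₀ : EuclideanSpace ℝ (Fin (n + 1)), ⨆ t₀ : Set.Ioi (0 : ℝ), Ffun n S x₀ t₀

lemma aux_poly_exp (m : ℕ) {x : ℝ} (hx : 0 ≤ x) :
    x ^ m * Real.exp (-x / 4) ≤ 4 ^ m * (m.factorial : ℝ) := by
  have h := Real.pow_div_factorial_le_exp (x / 4) (by positivity) m
  rw [div_pow, div_div, div_le_iff₀ (by positivity)] at h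
  calc x ^ m * Real.exp (-x / 4)
      ≤ Real.exp (x / 4) * (4 ^ m * (m.factorial : ℝ)) * Real.exp (-x / 4) :=
        mul_le_mul_of_nonneg_right h (Real.exp_pos _).le
    _ = 4 ^ m * (m.factorial : ℝ) * (Real.exp (x / 4) * Real.exp (-x / 4)) := by ring
    _ = 4 ^ m * (m.factorial : ℝ) := by
        rw [← Real.exp_add, show x / 4 + -x / 4 = 0 by ring, Real.exp_zero, mul_one]

lemma aux_summable (n : ℕ) :
    Summable (fun k : ℕ => (2:ℝ) ^ ((k + 1) * n) * Real.exp (-(4 ^ k) / 4)) := by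
  set D : ℝ := 2 ^ n * (4 ^ (n + 1) * ((n+1).factorial : ℝ)) with hD
  refine Summable.of_nonneg_of_le (fun k => by positivity) (fun k => ?_)
    ((summable_geometric_of_lt_one (by norm_num) (by norm_num : (1/2:ℝ) < 1)).mul_left D)
  have h2k : (0:ℝ) < 2 ^ k := by positivity
  rw [show D * (1/2:ℝ)^k = D / 2^k by rw [div_pow]; ring, le_div_iff₀ h2k]
  calc (2:ℝ) ^ ((k + 1) * n) * Real.exp (-(4 ^ k) / 4) * 2 ^ k
      = 2 ^ n * (2 ^ (k * n + k) * Real.exp (-(4 ^ k) / 4)) := by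
        rw [add_mul, one_mul, pow_add, pow_add]; ring
    _ ≤ 2 ^ n * (4 ^ (k * (n + 1)) * Real.exp (-(4 ^ k) / 4)) := by
        gcongr 2 ^ n * (?_ * Real.exp (-(4 ^ k) / 4))
        calc (2:ℝ) ^ (k * n + k) ≤ 4 ^ (k * n + k) := by gcongr <;> norm_num
          _ = 4 ^ (k * (n + 1)) := by ring_nf
    _ ≤ 2 ^ n * (4 ^ (n + 1) * ((n+1).factorial : ℝ)) := by
        gcongr 2 ^ n * ?_
        have := aux_poly_exp (n + 1) (show (0:ℝ) ≤ 4 ^ k by positivity)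
        rw [← pow_mul] at this
        rw [mul_comm k (n+1)] at *
        exact this
    _ = D := hD.symm

lemma aux_key (n : ℕ) (S : Set (EuclideanSpace ℝ (Fin (n + 1)))) (M : ℝ) (hM : 0 ≤ M)
    (hS : ∀ (x : EuclideanSpace ℝ (Fin (n + 1))) (r : ℝ), 0 < r →
      μH[(n : ℝ)] (S ∩ ball x r) ≤ ENNReal.ofReal (M * r ^ n))
    (x₀ : EuclideanSpace ℝ (Fin (n + 1))) (t₀ : ℝ) (ht : 0 < t₀) :
    Ffun n S x₀ t₀ ≤ (4 * Real.pi) ^ (-(n : ℝ) / 2) *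
      (1 + ∑' k : ℕ, (2:ℝ) ^ ((k + 1) * n) * Real.exp (-(4 ^ k) / 4)) * M := by
  have hπ : (0:ℝ) < Real.pi := Real.pi_pos
  set s := Real.sqrt t₀ with hs_def
  have hs : 0 < s := Real.sqrt_pos.mpr ht
  set a : ℕ → ℝ := fun k => (2:ℝ) ^ ((k + 1) * n) * Real.exp (-(4 ^ k) / 4) with ha
  set K : ℝ := 1 + ∑' k : ℕ, a k with hK
  set μ : Measure (EuclideanSpace ℝ (Fin (n + 1))) := μH[(n : ℝ)] with hμ
  set f : EuclideanSpace ℝ (Fin (n + 1)) → ℝ :=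
    fun x => Real.exp (-‖x - x₀‖ ^ 2 / (4 * t₀)) with hf
  have hf_cont : Continuous f :=
    Real.continuous_exp.comp
      ((((continuous_id.sub continuous_const).norm.pow 2).neg).div_const _)
  have hfeq : ∫ x in S, f x ∂μ = (∫⁻ x in S, ENNReal.ofReal (f x) ∂μ).toReal :=
    integral_eq_lintegral_of_nonneg_ae
      (Filter.Eventually.of_forall fun x => (Real.exp_pos _).le)
      hf_cont.aestronglyMeasurable
  -- the dominating function
  set g : ℕ → EuclideanSpace ℝ (Fin (n + 1)) → ENNReal := fun k x =>
    (ball x₀ (s * 2 ^ (k + 1))).indicator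
      (fun _ => ENNReal.ofReal (Real.exp (-(4 ^ k) / 4))) x with hg
  have hpt : ∀ x, ENNReal.ofReal (f x) ≤
      (ball x₀ s).indicator 1 x + ∑' k : ℕ, g k x := by
    intro x
    set d : ℝ := ‖x - x₀‖ with hd
    have hd0 : 0 ≤ d := norm_nonneg _
    by_cases hcase : d < s
    · have hmem : x ∈ ball x₀ s := by
        rw [mem_ball, dist_eq_norm]; exact hcase
      have h1 : ENNReal.ofReal (f x) ≤ (ball x₀ s).indicator 1 x := by
        rw [Set.indicator_of_mem hmem]
        simp only [Pi.one_apply]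
        refine ENNReal.ofReal_le_one.mpr (Real.exp_le_one_iff.mpr ?_)
        have : (0:ℝ) ≤ ‖x - x₀‖ ^ 2 / (4 * t₀) := by positivity
        linarith [neg_div (4 * t₀) (‖x - x₀‖ ^ 2)]
      exact le_add_right h1
    · push_neg at hcase
      have hd_pos : 0 < d := lt_of_lt_of_le hs hcase
      set q : ℝ := d / s with hq
      have hq1 : 1 ≤ q := (one_le_div hs).mpr hcase
      set m : ℕ := ⌊q⌋₊ with hm
      have hm1 : 1 ≤ m := Nat.le_floor (by exact_mod_cast hq1)
      set k : ℕ := Nat.log 2 m with hk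
      have hlow : (2:ℝ) ^ k ≤ q := by
        have h1 : 2 ^ k ≤ m := Nat.pow_log_le_self 2 (by omega)
        have h2 : (m:ℝ) ≤ q := Nat.floor_le (by linarith)
        calc (2:ℝ) ^ k = ((2 ^ k : ℕ) : ℝ) := by push_cast; ring
          _ ≤ (m:ℝ) := by exact_mod_cast h1
          _ ≤ q := h2
      have hhigh : q < (2:ℝ) ^ (k + 1) := by
        have h1 : q < m + 1 := Nat.lt_floor_add_one q
        have h2 : m + 1 ≤ 2 ^ (k + 1) := Nat.lt_pow_succ_log_self (by norm_num) m
        calc q < (m:ℝ) + 1 := h1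
          _ ≤ (2:ℝ) ^ (k + 1) := by exact_mod_cast h2
      have hmem : x ∈ ball x₀ (s * 2 ^ (k + 1)) := by
        rw [mem_ball, dist_eq_norm, ← hd]
        calc d = q * s := by rw [hq, div_mul_cancel₀ d hs.ne']
          _ < 2 ^ (k + 1) * s := by gcongr
          _ = s * 2 ^ (k + 1) := by ring
      have hdlow : s * 2 ^ k ≤ d := by
        rw [← le_div_iff₀' hs] at *; exact hlow
      have hfx : f x ≤ Real.exp (-(4 ^ k) / 4) := by
        rw [hf]
        refine Real.exp_le_exp.mpr ?_
        rw [neg_div, neg_div, neg_le_neg_iff, div_le_div_iff₀ (by norm_num) (by positivity)]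
        have h2 : t₀ * 4 ^ k ≤ d ^ 2 := by
          have : (s * 2 ^ k) ^ 2 ≤ d ^ 2 := by gcongr
          calc t₀ * 4 ^ k = s ^ 2 * ((2:ℝ) ^ k) ^ 2 := by
                rw [hs_def, Real.sq_sqrt ht.le, ← pow_mul, show k * 2 = 2 * k from mul_comm k 2,
                  pow_mul]; norm_num
            _ = (s * 2 ^ k) ^ 2 := by ring
            _ ≤ d ^ 2 := this
        nlinarith
      have h1 : ENNReal.ofReal (f x) ≤ g k x := by
        rw [hg]
        simp only [Set.indicator_of_mem hmem]
        exact ENNReal.ofReal_le_ofReal hfx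
      exact le_add_left (h1.trans (ENNReal.le_tsum k))
  -- bound the lintegral
  have hL : (∫⁻ x in S, ENNReal.ofReal (f x) ∂μ) ≤ ENNReal.ofReal (M * s ^ n * K) := by
    calc (∫⁻ x in S, ENNReal.ofReal (f x) ∂μ)
        ≤ ∫⁻ x in S, ((ball x₀ s).indicator 1 x + ∑' k : ℕ, g k x) ∂μ :=
          lintegral_mono hpt
      _ = (∫⁻ x in S, (ball x₀ s).indicator 1 x ∂μ) +
          ∫⁻ x in S, (∑' k : ℕ, g k x) ∂μ :=
          lintegral_add_left (measurable_one.indicator measurableSet_ball) _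
      _ = μ.restrict S (ball x₀ s) + ∑' k : ℕ, ∫⁻ x in S, g k x ∂μ := by
          rw [lintegral_indicator_one measurableSet_ball,
            lintegral_tsum fun k =>
              (measurable_const.indicator measurableSet_ball).aemeasurable]
      _ ≤ ENNReal.ofReal (M * s ^ n) + ∑' k : ℕ, ENNReal.ofReal (M * s ^ n * a k) := by
          gcongr with k
          · rw [Measure.restrict_apply measurableSet_ball, Set.inter_comm]
            exact hS x₀ s hs
          · rw [hg]
            simp only
            rw [lintegral_indicator measurableSet_ball, setLIntegral_const,
              Measure.restrict_apply measurableSet_ball, Set.inter_comm]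
            calc ENNReal.ofReal (Real.exp (-(4 ^ k) / 4)) * μ (S ∩ ball x₀ (s * 2 ^ (k + 1)))
                ≤ ENNReal.ofReal (Real.exp (-(4 ^ k) / 4)) *
                    ENNReal.ofReal (M * (s * 2 ^ (k + 1)) ^ n) := by
                  gcongr
                  exact hS x₀ (s * 2 ^ (k + 1)) (by positivity)
              _ = ENNReal.ofReal (Real.exp (-(4 ^ k) / 4) * (M * (s * 2 ^ (k + 1)) ^ n)) :=
                  (ENNReal.ofReal_mul (Real.exp_pos _).le).symm
              _ = ENNReal.ofReal (M * s ^ n * a k) := by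
                  congr 1
                  rw [ha]
                  simp only [mul_pow, ← pow_mul]
                  ring
      _ = ENNReal.ofReal (M * s ^ n * K) := by
          rw [← ENNReal.ofReal_tsum_of_nonneg (fun k => by positivity)
            ((aux_summable n).mul_left _),
            ← ENNReal.ofReal_add (by positivity)
              (tsum_nonneg fun k => by positivity),
            tsum_mul_left, hK]
          congr 1
          ring
  -- convert back
  have hKpos : (0:ℝ) < K := by
    have : 0 ≤ ∑' k : ℕ, a k := tsum_nonneg fun k => by positivity
    rw [hK]; linarith
  have hInt : ∫ x in S, f x ∂μ ≤ M * s ^ n * K := by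
    rw [hfeq]
    exact ENNReal.toReal_le_of_le_ofReal (by positivity) hL
  have hs_pow : s ^ n = t₀ ^ ((n:ℝ) / 2) := by
    rw [hs_def, ← Real.rpow_natCast (Real.sqrt t₀) n, Real.sqrt_eq_rpow,
      ← Real.rpow_mul ht.le]
    congr 1
    ring
  have hsplit : (4 * Real.pi * t₀ : ℝ) ^ (-(n:ℝ) / 2)
      = (4 * Real.pi) ^ (-(n:ℝ) / 2) * t₀ ^ (-(n:ℝ) / 2) :=
    Real.mul_rpow (by positivity) ht.le
  have hcancel : t₀ ^ (-(n:ℝ) / 2) * t₀ ^ ((n:ℝ) / 2) = 1 := by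
    rw [← Real.rpow_add ht, show -(n:ℝ) / 2 + (n:ℝ) / 2 = 0 by ring, Real.rpow_zero]
  have hcpos : (0:ℝ) < (4 * Real.pi * t₀ : ℝ) ^ (-(n:ℝ) / 2) :=
    Real.rpow_pos_of_pos (by positivity) _
  calc Ffun n S x₀ t₀
      = (4 * Real.pi * t₀) ^ (-(n : ℝ) / 2) * ∫ x in S, f x ∂μ := rfl
    _ ≤ (4 * Real.pi * t₀) ^ (-(n : ℝ) / 2) * (M * s ^ n * K) := by
        exact mul_le_mul_of_nonneg_left hInt hcpos.le
    _ = (4 * Real.pi) ^ (-(n:ℝ) / 2) * K * M *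
        (t₀ ^ (-(n:ℝ) / 2) * t₀ ^ ((n:ℝ) / 2)) := by
        rw [hsplit, hs_pow]; ring
    _ = (4 * Real.pi) ^ (-(n:ℝ) / 2) * K * M := by rw [hcancel, mul_one]

/-- Conversely, the entropy is bounded by a dimensional constant times the supremal
area ratio: if `ℋⁿ(Σ ∩ B_r(x)) ≤ M rⁿ` for all balls, then `λ(Σ) ≤ C(n) M`. -/
theorem stmt_8 (n : ℕ) :
    ∃ C : ℝ, 0 < C ∧
      ∀ (S : Set (EuclideanSpace ℝ (Fin (n + 1)))) (M : ℝ), 0 ≤ M →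
        (∀ (x : EuclideanSpace ℝ (Fin (n + 1))) (r : ℝ), 0 < r →
          μH[(n : ℝ)] (S ∩ ball x r) ≤ ENNReal.ofReal (M * r ^ n)) →
        entropy n S ≤ C * M := by
  have hπ : (0:ℝ) < Real.pi := Real.pi_pos
  set K : ℝ := 1 + ∑' k : ℕ, (2:ℝ) ^ ((k + 1) * n) * Real.exp (-(4 ^ k) / 4) with hK
  have hKpos : (0:ℝ) < K := by
    have : 0 ≤ ∑' k : ℕ, (2:ℝ) ^ ((k + 1) * n) * Real.exp (-(4 ^ k) / 4) :=
      tsum_nonneg fun k => by positivity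
    rw [hK]; linarith
  refine ⟨(4 * Real.pi) ^ (-(n : ℝ) / 2) * K,
    mul_pos (Real.rpow_pos_of_pos (by positivity) _) hKpos, ?_⟩
  intro S M hM hS
  have hCM : 0 ≤ (4 * Real.pi) ^ (-(n : ℝ) / 2) * K * M :=
    mul_nonneg (mul_pos (Real.rpow_pos_of_pos (by positivity) _) hKpos).le hM
  refine Real.iSup_le (fun x₀ => Real.iSup_le (fun t₀ => ?_) hCM) hCM
  exact aux_key n S M hM hS x₀ t₀ t₀.2
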